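/- arXiv:1906.00140 — 5 statements merged into one kernel-verified Lean document; each statement's English description precedes it below -/
import Mathlib

section
/- When a new vertex v together with a set of incident edges E(v) is inserted into a graph G (where v is not a vertex of G), every old edge e of G whose new trussness is unchanged or changed satisfies |τ_new(e) − τ_old(e)| ≤ 1, where τ_old is trussness in G and τ_new is trussness in G ∪ ({v}, E(v)). -/
open SimpleGraph

/-- Support of an edge (u,v) in a subgraph K: number of common neighbors of u and v in K. -/
noncomputable def esupp {V : Type*} {G : SimpleGraph V} (K : G.Subgraph) (u v : V) : ℕ :=
  {w | K.Adj u w ∧ K.Adj v w}.ncard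

/-- K is a k-truss: every edge of K is contained in at least k-2 triangles within K. -/
def IsKTruss {V : Type*} {G : SimpleGraph V} (K : G.Subgraph) (k : ℕ) : Prop :=
  ∀ u v, K.Adj u v → k - 2 ≤ esupp K u v

/-- Trussness of edge (u,v) in G: the largest k such that some k-truss of G contains (u,v). -/
noncomputable def tr {V : Type*} (G : SimpleGraph V) (u v : V) : ℕ :=
  sSup {k | ∃ K : G.Subgraph, K.Adj u v ∧ IsKTruss K k}

/-- Support of an edge (u,v) in a graph G. -/
noncomputable def gsupp {V : Type*} (G : SimpleGraph V) (u v : V) : ℕ :=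
  {w | G.Adj u w ∧ G.Adj v w}.ncard

lemma esupp_le_card {V : Type*} [Fintype V] {G : SimpleGraph V} (K : G.Subgraph) (u v : V) :
    esupp K u v ≤ Fintype.card V := by
  classical
  simpa [esupp, Set.ncard_univ] using
    Set.ncard_le_ncard (Set.subset_univ {w | K.Adj u w ∧ K.Adj v w}) Set.finite_univ

lemma trSet_bdd {V : Type*} [Fintype V] (G : SimpleGraph V) (x y : V) :
    BddAbove {k | ∃ K : G.Subgraph, K.Adj x y ∧ IsKTruss K k} := by
  refine ⟨Fintype.card V + 2, ?_⟩
  rintro k ⟨K, hxy, hK⟩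
  have h1 := hK x y hxy
  have h2 := esupp_le_card K x y
  omega

lemma zero_mem_trSet {V : Type*} {G : SimpleGraph V} {x y : V} (h : G.Adj x y) :
    0 ∈ {k | ∃ K : G.Subgraph, K.Adj x y ∧ IsKTruss K k} :=
  ⟨G.subgraphOfAdj h, by simp, fun u w _ => Nat.zero_le _⟩

/-- inserting a fresh vertex v with incident edges to N changes the
trussness of every old edge by at most 1. -/
theorem stmt4 {V : Type*} [Fintype V] (G G' : SimpleGraph V) (v : V) (N : Set V)
    (hvN : v ∉ N) (hIso : ∀ w, ¬ G.Adj v w)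
    (hG' : ∀ x y, G'.Adj x y ↔ G.Adj x y ∨ (x = v ∧ y ∈ N) ∨ (y = v ∧ x ∈ N)) :
    ∀ x y, G.Adj x y → tr G' x y ≤ tr G x y + 1 ∧ tr G x y ≤ tr G' x y + 1 := by
  classical
  intro x y hxy
  have hxv : x ≠ v := fun h => hIso y (h ▸ hxy)
  have hyv : y ≠ v := fun h => hIso x (h ▸ hxy.symm)
  have hle : ∀ a b, G.Adj a b → G'.Adj a b := fun a b h => (hG' a b).mpr (Or.inl h)
  have hxy' : G'.Adj x y := hle x y hxy
  -- easy direction: tr G ≤ tr G'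
  have h1 : tr G x y ≤ tr G' x y := by
    apply csSup_le_csSup (trSet_bdd G' x y) ⟨0, zero_mem_trSet hxy⟩
    rintro k ⟨K, hKxy, hK⟩
    exact ⟨⟨K.verts, K.Adj, fun h => hle _ _ (K.adj_sub h), K.edge_vert, K.symm⟩,
      hKxy, hK⟩
  refine ⟨?_, le_trans h1 (Nat.le_succ_of_le le_rfl)⟩
  -- hard direction: tr G' ≤ tr G + 1
  apply csSup_le ⟨0, zero_mem_trSet hxy'⟩
  rintro k ⟨K', hKxy, hK⟩
  -- delete v from K'
  set K : G.Subgraph :=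
    { verts := K'.verts \ {v}
      Adj := fun a b => K'.Adj a b ∧ a ≠ v ∧ b ≠ v
      adj_sub := by
        rintro a b ⟨hab, ha, hb⟩
        rcases (hG' a b).mp (K'.adj_sub hab) with h | ⟨h, _⟩ | ⟨h, _⟩
        · exact h
        · exact absurd h ha
        · exact absurd h hb
      edge_vert := by
        rintro a b ⟨hab, ha, hb⟩
        exact ⟨K'.edge_vert hab, ha⟩
      symm := ⟨by
        rintro a b ⟨hab, ha, hb⟩
        exact ⟨K'.adj_symm hab, hb, ha⟩⟩ } with hKdef
  have hKmem : (k - 1) ∈ {m | ∃ K : G.Subgraph, K.Adj x y ∧ IsKTruss K m} := by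
    refine ⟨K, ⟨hKxy, hxv, hyv⟩, ?_⟩
    rintro a b ⟨hab, ha, hb⟩
    have hsub : {w | K'.Adj a w ∧ K'.Adj b w} ⊆ {w | K.Adj a w ∧ K.Adj b w} ∪ {v} := by
      intro w ⟨hw1, hw2⟩
      by_cases hwv : w = v
      · exact Or.inr hwv
      · exact Or.inl ⟨⟨hw1, ha, hwv⟩, ⟨hw2, hb, hwv⟩⟩
    have hcard : esupp K' a b ≤ esupp K a b + 1 := by
      calc esupp K' a b ≤ ({w | K.Adj a w ∧ K.Adj b w} ∪ {v}).ncard :=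
            Set.ncard_le_ncard hsub (Set.toFinite _)
        _ ≤ esupp K a b + ({v} : Set V).ncard := Set.ncard_union_le _ _
        _ = esupp K a b + 1 := by rw [Set.ncard_singleton]
    have := hK a b hab
    omega
  have : k - 1 ≤ tr G x y := le_csSup (trSet_bdd G x y) hKmem
  omega
end

section
/- When a vertex v and all its incident edges are deleted from a graph G, every remaining edge e satisfies τ_new(e) ≥ τ_old(e) − 1, where τ_old is trussness in G and τ_new is trussness in G − v. -/
open SimpleGraph

/-- deleting a vertex v and all its incident edges decreases the
trussness of every remaining edge by at most 1. -/
theorem stmt5 {V : Type*} [Fintype V] (G G' : SimpleGraph V) (v : V)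
    (hG' : ∀ x y, G'.Adj x y ↔ G.Adj x y ∧ x ≠ v ∧ y ≠ v) :
    ∀ x y, G'.Adj x y → tr G x y ≤ tr G' x y + 1 := by
  intro x y hxy
  obtain ⟨hGxy, hxv, hyv⟩ := (hG' x y).mp hxy
  have hbound : ∀ (H : SimpleGraph V) (K : H.Subgraph) (u w : V),
      esupp K u w ≤ Fintype.card V := by
    intro H K u w
    calc esupp K u w ≤ (Set.univ : Set V).ncard :=
          Set.ncard_le_ncard (Set.subset_univ _) Set.finite_univ
      _ = Fintype.card V := by simp [Set.ncard_univ]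
  have hbdd : ∀ (H : SimpleGraph V) (u w : V),
      BddAbove {k | ∃ K : H.Subgraph, K.Adj u w ∧ IsKTruss K k} := by
    intro H u w
    refine ⟨Fintype.card V + 2, ?_⟩
    rintro k ⟨K, hK, hT⟩
    have h1 := hT u w hK
    have h2 := hbound H K u w
    omega
  apply csSup_le
  · exact ⟨0, ⊤, by simpa using hGxy, fun u w _ => by omega⟩
  rintro k ⟨K, hKxy, hT⟩
  set K' : G'.Subgraph :=
    { verts := K.verts \ {v}
      Adj := fun a b => K.Adj a b ∧ a ≠ v ∧ b ≠ v
      adj_sub := fun ⟨h, ha, hb⟩ => (hG' _ _).mpr ⟨K.adj_sub h, ha, hb⟩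
      edge_vert := fun ⟨h, ha, _⟩ => ⟨K.edge_vert h, ha⟩
      symm := ⟨fun a b ⟨h, ha, hb⟩ => ⟨h.symm, hb, ha⟩⟩ } with hK'def
  have hK'adj : ∀ a b, K'.Adj a b ↔ K.Adj a b ∧ a ≠ v ∧ b ≠ v := fun a b => Iff.rfl
  have hK'xy : K'.Adj x y := ⟨hKxy, hxv, hyv⟩
  have hTruss : IsKTruss K' (k - 1) := by
    rintro u w ⟨hKuw, huv, hwv⟩
    have h1 : k - 2 ≤ esupp K u w := hT u w hKuw
    have hset : {z | K'.Adj u z ∧ K'.Adj w z} = {z | K.Adj u z ∧ K.Adj w z} \ {v} := by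
      ext z
      simp only [hK'adj, Set.mem_setOf_eq, Set.mem_diff, Set.mem_singleton_iff]
      constructor
      · rintro ⟨⟨h1, _, h2⟩, ⟨h3, _, _⟩⟩; exact ⟨⟨h1, h3⟩, h2⟩
      · rintro ⟨⟨h1, h3⟩, h2⟩; exact ⟨⟨h1, huv, h2⟩, ⟨h3, hwv, h2⟩⟩
    have hcard : esupp K u w ≤ esupp K' u w + 1 := by
      unfold esupp
      rw [hset]
      have hsub : {z | K.Adj u z ∧ K.Adj w z} ⊆
          ({z | K.Adj u z ∧ K.Adj w z} \ {v}) ∪ {v} := by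
        intro z hz
        by_cases h : z = v
        · exact Or.inr h
        · exact Or.inl ⟨hz, h⟩
      calc {z | K.Adj u z ∧ K.Adj w z}.ncard
          ≤ (({z | K.Adj u z ∧ K.Adj w z} \ {v}) ∪ {v}).ncard :=
            Set.ncard_le_ncard hsub (Set.toFinite _)
        _ ≤ ({z | K.Adj u z ∧ K.Adj w z} \ {v}).ncard + ({v} : Set V).ncard :=
            Set.ncard_union_le _ _
        _ = ({z | K.Adj u z ∧ K.Adj w z} \ {v}).ncard + 1 := by
            rw [Set.ncard_singleton]
    omega
  have hmem : k - 1 ∈ {k | ∃ K : G'.Subgraph, K.Adj x y ∧ IsKTruss K k} :=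
    ⟨K', hK'xy, hTruss⟩
  have hle : k - 1 ≤ tr G' x y := le_csSup (hbdd G' x y) hmem
  omega
end

section
/- Suppose a vertex v with incident edges E(v) is deleted from graph G, and let l = max over e in E(v) of the old trussness τ_old(e). Then for every remaining edge e (an edge of G not incident to v) with τ_old(e) > l, the trussness is unchanged: τ_new(e) = τ_old(e). (Rule 2 for node deletion.) -/
open SimpleGraph

lemma truss_bdd {V : Type*} [Fintype V] {G : SimpleGraph V} (u v : V) :
    BddAbove {k | ∃ K : G.Subgraph, K.Adj u v ∧ IsKTruss K k} := by
  refine ⟨Fintype.card V + 2, ?_⟩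
  rintro k ⟨K, hadj, htruss⟩
  have h1 := htruss u v hadj
  have h2 := esupp_le_card K u v
  omega

/-- Rule 2 for node deletion: delete a vertex v with its incident edges;
let l be the maximum old trussness over edges incident to v. Then every remaining edge
of old trussness > l keeps its trussness. -/
theorem stmt7 {V : Type*} [Fintype V] (G G' : SimpleGraph V) (v : V)
    (hG' : ∀ x y, G'.Adj x y ↔ G.Adj x y ∧ x ≠ v ∧ y ≠ v) :
    ∀ x y, G'.Adj x y → sSup ((tr G v) '' {w | G.Adj v w}) < tr G x y →
      tr G' x y = tr G x y := by
  intro x y hxy hl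
  have hGle : ∀ a b, G'.Adj a b → G.Adj a b := fun a b h => ((hG' a b).1 h).1
  -- ≤ direction
  have hsub : {k | ∃ K : G'.Subgraph, K.Adj x y ∧ IsKTruss K k} ⊆
      {k | ∃ K : G.Subgraph, K.Adj x y ∧ IsKTruss K k} := by
    rintro k ⟨K, hadj, ht⟩
    refine ⟨⟨K.verts, K.Adj, fun h => hGle _ _ (K.adj_sub h), fun h => K.edge_vert h,
      K.symm⟩, hadj, fun u w huw => ht u w huw⟩
  have hne' : {k | ∃ K : G'.Subgraph, K.Adj x y ∧ IsKTruss K k}.Nonempty := by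
    refine ⟨0, ⊤, hxy, fun u w _ => ?_⟩
    simp
  have hle : tr G' x y ≤ tr G x y := csSup_le_csSup (truss_bdd x y) hne' hsub
  -- ≥ direction
  have hneS : {k | ∃ K : G.Subgraph, K.Adj x y ∧ IsKTruss K k}.Nonempty := by
    refine ⟨0, ⊤, hGle x y hxy, fun u w _ => ?_⟩
    simp
  have hmem : tr G x y ∈ {k | ∃ K : G.Subgraph, K.Adj x y ∧ IsKTruss K k} :=
    Nat.sSup_mem hneS (truss_bdd x y)
  obtain ⟨K, hKxy, hKt⟩ := hmem
  -- no edge of K touches v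
  have hnv : ∀ a b, K.Adj a b → a ≠ v := by
    intro a b hab hav
    subst hav
    have h1 : tr G x y ≤ tr G a b :=
      le_csSup (truss_bdd a b) ⟨K, hab, hKt⟩
    have h2 : tr G a b ≤ sSup ((tr G a) '' {w | G.Adj a w}) := by
      apply le_csSup
      · exact Set.Finite.bddAbove ((Set.toFinite _).image _)
      · exact ⟨b, K.adj_sub hab, rfl⟩
    omega
  -- transport K to G'
  refine le_antisymm hle ?_
  apply le_csSup (truss_bdd x y)
  refine ⟨⟨K.verts, K.Adj, fun h => (hG' _ _).2 ⟨K.adj_sub h, hnv _ _ h, hnv _ _ (K.adj_symm h)⟩,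
    fun h => K.edge_vert h, K.symm⟩, hKxy, fun u w huw => hKt u w huw⟩
end

section
/- Let G be a graph, v a fresh vertex, and suppose v is inserted with edges to a set N(v) ⊆ V(G). Fix k ≥ 2 and let H ⊆ G[N(v)] be a subgraph such that every edge e of H has trussness τ_G(e) ≥ k and every vertex u of H has degree at least k−2 in H. Then in the new graph G' = G ∪ ({v}, {(v,w) : w ∈ V(H)} ∪ further edges of E(v)), every new edge (v,w) with w ∈ V(H) has trussness τ_{G'}((v,w)) ≥ k. (Lower-bound direction of Lemma 1.) -/
open SimpleGraph

lemma tr_bdd {V : Type*} [Fintype V] (G : SimpleGraph V) (u v : V) :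
    BddAbove {k | ∃ K : G.Subgraph, K.Adj u v ∧ IsKTruss K k} := by
  refine ⟨Fintype.card V + 2, ?_⟩
  rintro k ⟨K, hadj, htruss⟩
  have h1 := htruss u v hadj
  have h2 := esupp_le_card K u v
  omega

/-- from trussness ≥ k ≥ 2 extract a witness k-truss -/
lemma exists_truss {V : Type*} [Fintype V] (G : SimpleGraph V) (u v : V) (k : ℕ)
    (hk : 2 ≤ k) (h : k ≤ tr G u v) :
    ∃ K : G.Subgraph, K.Adj u v ∧ IsKTruss K k := by
  set S := {k | ∃ K : G.Subgraph, K.Adj u v ∧ IsKTruss K k} with hS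
  have hbdd : BddAbove S := tr_bdd G u v
  have hne : S.Nonempty := by
    by_contra hc
    rw [Set.not_nonempty_iff_eq_empty] at hc
    rw [tr, ← hS, hc] at h
    simp at h
    omega
  have hmem : sSup S ∈ S := Nat.sSup_mem hne hbdd
  obtain ⟨K, hadj, htruss⟩ := hmem
  exact ⟨K, hadj, fun a b hab => le_trans (by have := h; rw [tr, ← hS] at this; omega)
    (htruss a b hab)⟩

/-- lower bound of Lemma 1: if H ⊆ G[N(v)] has all edges of trussness
≥ k in G and all vertices of degree ≥ k-2 in H, then after inserting the fresh vertex
v with edges to N, every new edge (v,w) with w ∈ V(H) has trussness ≥ k. -/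
theorem stmt8 {V : Type*} [Fintype V] (G G' : SimpleGraph V) (v : V) (N : Set V)
    (hvN : v ∉ N) (hIso : ∀ w, ¬ G.Adj v w)
    (hG' : ∀ x y, G'.Adj x y ↔ G.Adj x y ∨ (x = v ∧ y ∈ N) ∨ (y = v ∧ x ∈ N))
    (k : ℕ) (hk : 2 ≤ k) (H : G.Subgraph) (hHN : H.verts ⊆ N)
    (hedge : ∀ x y, H.Adj x y → k ≤ tr G x y)
    (hdeg : ∀ u ∈ H.verts, k - 2 ≤ (H.neighborSet u).ncard) :
    ∀ w ∈ H.verts, k ≤ tr G' v w := by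
  -- choose a k-truss for each edge of H
  have hch : ∀ a b, H.Adj a b → ∃ K : G.Subgraph, K.Adj a b ∧ IsKTruss K k :=
    fun a b hab => exists_truss G a b k hk (hedge a b hab)
  choose K hK1 hK2 using hch
  -- the combined subgraph of G'
  set A : V → V → Prop := fun x y =>
    H.Adj x y ∨ (x = v ∧ y ∈ H.verts) ∨ (y = v ∧ x ∈ H.verts) ∨
      ∃ a b, ∃ h : H.Adj a b, (K a b h).Adj x y with hA
  have hAsymm : Symmetric A := by
    rintro x y (h | ⟨rfl, hy⟩ | ⟨rfl, hx⟩ | ⟨a, b, hab, hadj⟩)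
    · exact Or.inl h.symm
    · exact Or.inr (Or.inr (Or.inl ⟨rfl, hy⟩))
    · exact Or.inr (Or.inl ⟨rfl, hx⟩)
    · exact Or.inr (Or.inr (Or.inr ⟨a, b, hab, hadj.symm⟩))
  have hAsub : ∀ {x y}, A x y → G'.Adj x y := by
    rintro x y (h | ⟨rfl, hy⟩ | ⟨rfl, hx⟩ | ⟨a, b, hab, hadj⟩)
    · exact (hG' x y).2 (Or.inl (H.adj_sub h))
    · exact (hG' x y).2 (Or.inr (Or.inl ⟨rfl, hHN hy⟩))
    · exact (hG' x y).2 (Or.inr (Or.inr ⟨rfl, hHN hx⟩))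
    · exact (hG' x y).2 (Or.inl ((K a b hab).adj_sub hadj))
  set K' : G'.Subgraph :=
    { verts := Set.univ
      Adj := A
      adj_sub := fun h => hAsub h
      edge_vert := fun _ => Set.mem_univ _
      symm := ⟨fun _ _ h => hAsymm h⟩ } with hK'
  have hKadjA : ∀ a b (h : H.Adj a b) x y, (K a b h).Adj x y → K'.Adj x y :=
    fun a b h x y hadj => Or.inr (Or.inr (Or.inr ⟨a, b, h, hadj⟩))
  have hHadjA : ∀ x y, H.Adj x y → K'.Adj x y := fun x y h => Or.inl h
  have hvadjA : ∀ y, y ∈ H.verts → K'.Adj v y := fun y hy => Or.inr (Or.inl ⟨rfl, hy⟩)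
  have hsub_supp : ∀ (L : G.Subgraph) (u₁ u₂ : V),
      (∀ x y, L.Adj x y → K'.Adj x y) → esupp L u₁ u₂ ≤ esupp K' u₁ u₂ := by
    intro L u₁ u₂ hL
    apply Set.ncard_le_ncard _ (Set.toFinite _)
    rintro w ⟨h1, h2⟩
    exact ⟨hL _ _ h1, hL _ _ h2⟩
  have htruss : IsKTruss K' k := by
    rintro u₁ u₂ (h | ⟨rfl, hy⟩ | ⟨rfl, hx⟩ | ⟨a, b, hab, hadj⟩)
    · exact le_trans (hK2 u₁ u₂ h u₁ u₂ (hK1 u₁ u₂ h)) (hsub_supp _ _ _ (hKadjA u₁ u₂ h))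
    · -- edge (v, u₂)
      refine le_trans (hdeg u₂ hy) ?_
      apply Set.ncard_le_ncard _ (Set.toFinite _)
      intro n hn
      exact ⟨hvadjA n (H.edge_vert (H.adj_symm hn)), hHadjA u₂ n hn⟩
    · -- edge (u₁, v)
      refine le_trans (hdeg u₁ hx) ?_
      apply Set.ncard_le_ncard _ (Set.toFinite _)
      intro n hn
      exact ⟨hHadjA u₁ n hn, hvadjA n (H.edge_vert (H.adj_symm hn))⟩
    · exact le_trans (hK2 a b hab u₁ u₂ hadj) (hsub_supp _ _ _ (hKadjA a b hab))
  intro w hw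
  exact le_csSup (tr_bdd G' v w) ⟨K', hvadjA w hw, htruss⟩
end

section
/- With lower bound k_low(e) = max{k : w ∈ G_v^{k, k−2}} and upper bound k_up(e) = max{k : w ∈ G_v^{k−1, k−2}} for a newly inserted edge e = (v,w), we have k_low(e) ≤ k_up(e) ≤ k_low(e) + 1. -/
open SimpleGraph

/-- The family of subgraphs H ⊆ G[N] with every edge of trussness ≥ k in G and every
vertex of degree ≥ d in H. -/
def fam {V : Type*} (G : SimpleGraph V) (N : Set V) (k d : ℕ) : Set G.Subgraph :=
  {H | H.verts ⊆ N ∧ (∀ x y, H.Adj x y → k ≤ tr G x y) ∧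
    ∀ u ∈ H.verts, d ≤ (H.neighborSet u).ncard}

/-- The (k,d)-neighborhood G_v^{k,d}: the maximal subgraph of G[N(v)] in the family. -/
noncomputable def nbhd {V : Type*} (G : SimpleGraph V) (N : Set V) (k d : ℕ) : G.Subgraph :=
  sSup (fam G N k d)

lemma mem_nbhd_iff {V : Type*} (G : SimpleGraph V) (N : Set V) (k d : ℕ) (w : V) :
    w ∈ (nbhd G N k d).verts ↔ ∃ H ∈ fam G N k d, w ∈ H.verts := by
  simp [nbhd, Subgraph.verts_sSup]

/-- for a newly inserted edge e = (v,w), the lower bound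
k_low(e) = max{k : w ∈ G_v^{k,k-2}} and the upper bound
k_up(e) = max{k : w ∈ G_v^{k-1,k-2}} satisfy k_low(e) ≤ k_up(e) ≤ k_low(e) + 1. -/
theorem stmt10 {V : Type*} [Fintype V] (G : SimpleGraph V) (v : V) (N : Set V)
    (hvN : v ∉ N) (hIso : ∀ w, ¬ G.Adj v w) (w : V) (hw : w ∈ N) :
    sSup {k | w ∈ (nbhd G N k (k - 2)).verts} ≤
      sSup {k | w ∈ (nbhd G N (k - 1) (k - 2)).verts} ∧
    sSup {k | w ∈ (nbhd G N (k - 1) (k - 2)).verts} ≤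
      sSup {k | w ∈ (nbhd G N k (k - 2)).verts} + 1 := by
  classical
  set A := {k | w ∈ (nbhd G N k (k - 2)).verts} with hA
  set B := {k | w ∈ (nbhd G N (k - 1) (k - 2)).verts} with hB
  have hAB : A ⊆ B := by
    intro k hk
    rw [hA, Set.mem_setOf_eq, mem_nbhd_iff] at hk
    obtain ⟨H, ⟨h1, h2, h3⟩, hwH⟩ := hk
    rw [hB, Set.mem_setOf_eq, mem_nbhd_iff]
    exact ⟨H, ⟨h1, fun x y hxy => le_trans (Nat.sub_le k 1) (h2 x y hxy), h3⟩, hwH⟩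
  have hshift : ∀ k ∈ B, k - 1 ∈ A := by
    intro k hk
    rw [hB, Set.mem_setOf_eq, mem_nbhd_iff] at hk
    obtain ⟨H, ⟨h1, h2, h3⟩, hwH⟩ := hk
    rw [hA, Set.mem_setOf_eq, mem_nbhd_iff]
    refine ⟨H, ⟨h1, h2, fun u hu => le_trans ?_ (h3 u hu)⟩, hwH⟩
    omega
  have h0A : (0 : ℕ) ∈ A := by
    rw [hA, Set.mem_setOf_eq, mem_nbhd_iff]
    refine ⟨SimpleGraph.singletonSubgraph G w, ⟨?_, ?_, ?_⟩, by
      simp [SimpleGraph.singletonSubgraph]⟩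
    · simpa [SimpleGraph.singletonSubgraph] using hw
    · intro x y hxy
      simp [SimpleGraph.singletonSubgraph] at hxy
    · intro u hu; exact Nat.zero_le _
  have hBbdd : BddAbove B := by
    refine ⟨Fintype.card V + 2, fun k hk => ?_⟩
    rw [hB, Set.mem_setOf_eq, mem_nbhd_iff] at hk
    obtain ⟨H, ⟨h1, h2, h3⟩, hwH⟩ := hk
    have := h3 w hwH
    have hle : (H.neighborSet w).ncard ≤ Fintype.card V := by
      have := Set.ncard_le_ncard (Set.subset_univ (H.neighborSet w)) Set.finite_univ
      simpa [Set.ncard_univ] using this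
    omega
  have hAbdd : BddAbove A := hBbdd.mono hAB
  constructor
  · exact csSup_le_csSup hBbdd ⟨0, h0A⟩ hAB
  · refine csSup_le ⟨0, hAB h0A⟩ fun k hk => ?_
    have := le_csSup hAbdd (hshift k hk)
    omega
end
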